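/- In the lower-bound construction, if an allocation is locally envy-free on connected undirected graph G and j ∈ S_i has a path to i lying in S ∪ {i}, then the Lebesgue measure of j's piece is at least the Lebesgue measure of i's piece. -/
import Mathlib

/-- In the lower-bound construction, suppose all agents of `S` have uniform
(Lebesgue) valuations on `[0,1]` and the allocation is locally envy-free on `G`.
If `j` is connected to `i` by a path all of whose vertices after `i` lie in `S`,
then the Lebesgue measure of `j`'s piece is at least that of `i`'s piece. -/
theorem measures_nondecreasing_along_path
    {V : Type*} (G : SimpleGraph V) (S : Set V)
    (v : V → Set ℝ → ℝ) (A : V → Set ℝ)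
    (hsub : ∀ u, A u ⊆ Set.Icc (0:ℝ) 1)
    (hunif : ∀ s ∈ S, ∀ u, v s (A u) = (MeasureTheory.volume (A u)).toReal)
    (hlef : ∀ a b, G.Adj a b → v a (A b) ≤ v a (A a))
    (i j : V)
    (hpath : Relation.ReflTransGen (fun a b => G.Adj a b ∧ b ∈ S) i j) :
    MeasureTheory.volume (A i) ≤ MeasureTheory.volume (A j) := by
  have hfin : ∀ u, MeasureTheory.volume (A u) ≠ ⊤ := by
    intro u
    have := MeasureTheory.measure_mono (μ := MeasureTheory.volume) (hsub u)
    simp [Real.volume_Icc] at this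
    exact ne_top_of_le_ne_top (by simp) this
  induction hpath with
  | refl => exact le_rfl
  | tail hab h ih =>
    rename_i b c
    obtain ⟨hadj, hcS⟩ := h
    have h1 := hlef c b hadj.symm
    rw [hunif c hcS b, hunif c hcS c] at h1
    exact le_trans ih ((ENNReal.toReal_le_toReal (hfin b) (hfin c)).mp h1)
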